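/- If φ''_{2F} + G''_F(ρ'_F + 2ρ'_{2F})² + 2G'_F ρ''_{2F} > 0, then there exists u ∈ U with ‖Du‖²_{ℓ²ε} = 1 and Q^a(u) < A_F; indeed the sequence ũ_ℓ := (−1)^ℓ ε/(2√2) satisfies ũ ∈ U, ‖Dũ‖²_{ℓ²ε} = 1, and Q^a(ũ) = φ''_F + 2G'_F ρ''_F = A_F − 4[φ''_{2F} + G''_F(ρ'_F + 2ρ'_{2F})² + 2G'_F ρ''_{2F}] < A_F. (Thus the uniform deformation can be unstable for the atomistic model while stable for the local quasicontinuum model, whose second variation is A_F‖Du‖²_{ℓ²ε}.) -/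

import Mathlib

open Finset

noncomputable section

/-- `u` is `2N`-periodic. -/
def IsPer (N : ℤ) (u : ℤ → ℝ) : Prop := ∀ ℓ : ℤ, u (ℓ + 2*N) = u ℓ

/-- `u` belongs to the displacement space `U`: `2N`-periodic with zero mean. -/
def InU (N : ℤ) (u : ℤ → ℝ) : Prop :=
  IsPer N u ∧ ∑ ℓ ∈ Finset.Icc (-N+1) N, u ℓ = 0

/-- the scaled reference atomic spacing `ε = 1/N`. -/
def eps (N : ℤ) : ℝ := 1 / (N : ℝ)

/-- discrete derivative `(Dv)_ℓ = (v_ℓ - v_{ℓ-1})/ε`. -/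
def Dd (N : ℤ) (v : ℤ → ℝ) : ℤ → ℝ := fun ℓ => (v ℓ - v (ℓ-1)) / eps N

/-- squared `ℓ²ε` norm: `ε Σ_{ℓ=-N+1}^{N} v_ℓ²`. -/
def nrm2 (N : ℤ) (v : ℤ → ℝ) : ℝ := eps N * ∑ ℓ ∈ Finset.Icc (-N+1) N, (v ℓ)^2

/-- the atomistic second-variation quadratic form `Q^a`. -/
def Qa (N : ℤ) (pF p2F rF r2F rrF rr2F g1 g2 : ℝ) (u : ℤ → ℝ) : ℝ :=
  eps N * ∑ ℓ ∈ Finset.Icc (-N+1) N,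
    (g2 * (rF * (Dd N u ℓ + Dd N u (ℓ+1))
        + r2F * (Dd N u (ℓ-1) + Dd N u ℓ + Dd N u (ℓ+1) + Dd N u (ℓ+2)))^2
     + g1 * (rrF * (Dd N u ℓ)^2 + rr2F * (Dd N u ℓ + Dd N u (ℓ-1))^2
           + rrF * (Dd N u (ℓ+1))^2 + rr2F * (Dd N u (ℓ+1) + Dd N u (ℓ+2))^2)
     + (1/2) * (pF * ((Dd N u ℓ)^2 + (Dd N u (ℓ+1))^2)
           + p2F * ((Dd N u ℓ + Dd N u (ℓ-1))^2 + (Dd N u (ℓ+1) + Dd N u (ℓ+2))^2)))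

/-- `Ã_F = φ''_F + 4φ''_{2F}`. -/
def Atil (pF p2F : ℝ) : ℝ := pF + 4*p2F

/-- `Â_F = 4G''_F(ρ'_F+2ρ'_{2F})² + 2G'_F(ρ''_F+4ρ''_{2F})`. -/
def Ahat (rF r2F rrF rr2F g1 g2 : ℝ) : ℝ := 4*g2*(rF + 2*r2F)^2 + 2*g1*(rrF + 4*rr2F)

/-- `A_F = Â_F + Ã_F`. -/
def AFc (pF p2F rF r2F rrF rr2F g1 g2 : ℝ) : ℝ := Ahat rF r2F rrF rr2F g1 g2 + Atil pF p2F

/-- `B_F`. -/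
def BFc (p2F rF r2F rr2F g1 g2 : ℝ) : ℝ :=
  -(p2F + g2*(rF^2 + 20*r2F^2 + 12*rF*r2F) + 2*g1*rr2F)

/-- `C_F`. -/
def CFc (rF r2F g2 : ℝ) : ℝ := g2*(8*r2F^2 + 2*rF*r2F)

/-- `D_F`. -/
def DFc (r2F g2 : ℝ) : ℝ := -(g2*r2F^2)

/-- `λ_F(s) = A_F + B_F s + C_F s² + D_F s³`. -/
def lamF (pF p2F rF r2F rrF rr2F g1 g2 s : ℝ) : ℝ :=
  AFc pF p2F rF r2F rrF rr2F g1 g2 + BFc p2F rF r2F rr2F g1 g2 * s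
    + CFc rF r2F g2 * s^2 + DFc r2F g2 * s^3

/- ### auxiliary lemmas -/

lemma neg_one_zpow_sub_one (ℓ : ℤ) : (-1:ℝ)^(ℓ-1) = -(-1:ℝ)^ℓ := by
  rw [zpow_sub_one₀ (by norm_num : (-1:ℝ) ≠ 0)]
  norm_num

lemma neg_one_zpow_add_one (ℓ : ℤ) : (-1:ℝ)^(ℓ+1) = -(-1:ℝ)^ℓ := by
  rw [zpow_add_one₀ (by norm_num : (-1:ℝ) ≠ 0)]
  ring

lemma neg_one_zpow_sq (ℓ : ℤ) : ((-1:ℝ)^ℓ)^2 = 1 := by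
  rw [← zpow_natCast ((-1:ℝ)^ℓ) 2, ← zpow_mul]
  exact Even.neg_one_zpow ⟨ℓ, by ring⟩

lemma sum_neg_one_zpow (N : ℤ) : ∑ ℓ ∈ Icc (-N+1) N, (-1:ℝ)^ℓ = 0 := by
  refine Finset.sum_involution (fun ℓ _ => -ℓ+1) ?_ ?_ ?_ ?_
  · intro ℓ hℓ
    have : (-1:ℝ)^(-ℓ+1) = -(-1:ℝ)^ℓ := by
      rw [zpow_add_one₀ (by norm_num : (-1:ℝ) ≠ 0), zpow_neg, ← inv_zpow]
      norm_num
    simp only [this]; ring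
  · intro ℓ _ _; omega
  · intro ℓ hℓ; simp only [mem_Icc] at hℓ ⊢; omega
  · intro ℓ _; ring

lemma sum_const_Icc (N : ℤ) (hN : 1 ≤ N) (c : ℝ) :
    ∑ _ℓ ∈ Icc (-N+1) N, c = 2*(N:ℝ)*c := by
  rw [Finset.sum_const, Int.card_Icc]
  have h1 : (N + 1 - (-N+1)).toNat = (2*N).toNat := by omega
  rw [h1, nsmul_eq_mul]
  have h2 : ((2*N).toNat : ℝ) = 2*(N:ℝ) := by
    have : ((2*N).toNat : ℤ) = 2*N := by omega
    exact_mod_cast congrArg (Int.cast : ℤ → ℝ) this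
  rw [h2]

/-- the atomistic model can be less stable than the local QC model. -/
theorem atomistic_less_stable_than_qcl (N : ℤ) (hN : 1 ≤ N)
    (pF p2F rF r2F rrF rr2F g1 g2 : ℝ)
    (h : 0 < p2F + g2*(rF + 2*r2F)^2 + 2*g1*rr2F) :
    (∃ u : ℤ → ℝ, InU N u ∧ nrm2 N (Dd N u) = 1 ∧
      Qa N pF p2F rF r2F rrF rr2F g1 g2 u < AFc pF p2F rF r2F rrF rr2F g1 g2) ∧
    InU N (fun ℓ : ℤ => (-1:ℝ)^ℓ * eps N / (2 * Real.sqrt 2)) ∧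
    nrm2 N (Dd N (fun ℓ : ℤ => (-1:ℝ)^ℓ * eps N / (2 * Real.sqrt 2))) = 1 ∧
    Qa N pF p2F rF r2F rrF rr2F g1 g2 (fun ℓ : ℤ => (-1:ℝ)^ℓ * eps N / (2 * Real.sqrt 2)) = pF + 2*g1*rrF ∧
    pF + 2*g1*rrF
      = AFc pF p2F rF r2F rrF rr2F g1 g2
        - 4*(p2F + g2*(rF + 2*r2F)^2 + 2*g1*rr2F) ∧
    pF + 2*g1*rrF < AFc pF p2F rF r2F rrF rr2F g1 g2 := by
  set f : ℤ → ℝ := fun ℓ : ℤ => (-1:ℝ)^ℓ * eps N / (2 * Real.sqrt 2) with hf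
  have hNne : (N:ℝ) ≠ 0 := by
    have : (0:ℝ) < (N:ℝ) := by exact_mod_cast (by omega : (0:ℤ) < N)
    linarith
  have heps : eps N ≠ 0 := by simp [eps, hNne]
  have hs2 : Real.sqrt 2 ≠ 0 := by positivity
  have hs2sq : Real.sqrt 2 ^ 2 = 2 := Real.sq_sqrt (by norm_num)
  -- the discrete derivative of f
  have hD : ∀ ℓ : ℤ, Dd N f ℓ = (-1:ℝ)^ℓ / Real.sqrt 2 := by
    intro ℓ
    simp only [Dd, hf, neg_one_zpow_sub_one ℓ]
    field_simp
    ring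
  have hDsq : ∀ ℓ : ℤ, (Dd N f ℓ)^2 = 1/2 := by
    intro ℓ
    rw [hD, div_pow, neg_one_zpow_sq, hs2sq]
  have hD1 : ∀ ℓ : ℤ, Dd N f (ℓ-1) = -((-1:ℝ)^ℓ / Real.sqrt 2) := by
    intro ℓ
    rw [hD, neg_one_zpow_sub_one, neg_div]
  have hDp1 : ∀ ℓ : ℤ, Dd N f (ℓ+1) = -((-1:ℝ)^ℓ / Real.sqrt 2) := by
    intro ℓ
    rw [hD, neg_one_zpow_add_one, neg_div]
  have hDp2 : ∀ ℓ : ℤ, Dd N f (ℓ+2) = (-1:ℝ)^ℓ / Real.sqrt 2 := by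
    intro ℓ
    have : ℓ + 2 = (ℓ+1) + 1 := by ring
    rw [this, hD, neg_one_zpow_add_one, neg_one_zpow_add_one]
    ring_nf
  -- f is in U
  have hInU : InU N f := by
    constructor
    · intro ℓ
      simp only [hf]
      have : (-1:ℝ)^(ℓ + 2*N) = (-1:ℝ)^ℓ := by
        rw [zpow_add₀ (by norm_num : (-1:ℝ) ≠ 0), zpow_mul]
        norm_num
      rw [this]
    · simp only [hf, mul_div_assoc]
      rw [← Finset.sum_mul, sum_neg_one_zpow, zero_mul]
  -- norm of Df is 1
  have hnrm : nrm2 N (Dd N f) = 1 := by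
    unfold nrm2
    rw [Finset.sum_congr rfl (fun ℓ _ => hDsq ℓ), sum_const_Icc N hN]
    simp only [eps]
    field_simp
  -- value of Qa
  have hQa : Qa N pF p2F rF r2F rrF rr2F g1 g2 f = pF + 2*g1*rrF := by
    unfold Qa
    have hterm : ∀ ℓ ∈ Icc (-N+1) N,
        (g2 * (rF * (Dd N f ℓ + Dd N f (ℓ+1))
        + r2F * (Dd N f (ℓ-1) + Dd N f ℓ + Dd N f (ℓ+1) + Dd N f (ℓ+2)))^2
        + g1 * (rrF * (Dd N f ℓ)^2 + rr2F * (Dd N f ℓ + Dd N f (ℓ-1))^2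
           + rrF * (Dd N f (ℓ+1))^2 + rr2F * (Dd N f (ℓ+1) + Dd N f (ℓ+2))^2)
        + (1/2) * (pF * ((Dd N f ℓ)^2 + (Dd N f (ℓ+1))^2)
           + p2F * ((Dd N f ℓ + Dd N f (ℓ-1))^2 + (Dd N f (ℓ+1) + Dd N f (ℓ+2))^2)))
        = g1*rrF + pF/2 := by
      intro ℓ _
      rw [hD ℓ, hD1 ℓ, hDp1 ℓ, hDp2 ℓ]
      set d : ℝ := (-1:ℝ)^ℓ / Real.sqrt 2 with hdd
      have hd : d^2 = 1/2 := by
        rw [hdd, div_pow, neg_one_zpow_sq, hs2sq]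
      linear_combination (2*g1*rrF + pF) * hd
    rw [Finset.sum_congr rfl hterm, sum_const_Icc N hN]
    simp only [eps]
    field_simp
    ring
  have hident : pF + 2*g1*rrF
      = AFc pF p2F rF r2F rrF rr2F g1 g2
        - 4*(p2F + g2*(rF + 2*r2F)^2 + 2*g1*rr2F) := by
    unfold AFc Ahat Atil; ring
  have hlt : pF + 2*g1*rrF < AFc pF p2F rF r2F rrF rr2F g1 g2 := by
    rw [hident]; linarith
  exact ⟨⟨f, hInU, hnrm, by rw [hQa]; exact hlt⟩, hInU, hnrm, hQa, hident, hlt⟩
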